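/- In a symmetric fictitious play process on the transitive game T^n starting at x₁ = e₁, the indices played are nondecreasing and increase by at most 1 per step, and the waiting times between successive new indices are strictly increasing: letting τ_k = min{t : x_t = e_k}, one has τ_{k+1} − τ_k > τ_k − τ_{k−1} for all applicable k < n. -/

import Mathlib

open Matrix Finset

/-- In a symmetric fictitious play process on the transitive game `Tⁿ` starting at
`x₁ = e₁`: the indices played are nondecreasing, increasing by at most `1` per step;
each strategy index is eventually played; and the waiting times `τ_k = min{t : x_t = e_k}`
between successive new indices are strictly increasing:
`τ_{k+1} − τ_k > τ_k − τ_{k−1}` for all applicable `k < n`. (Indices here are `0`-based,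
so the `1`-based entry `(n − i + 2)/n` of `Tⁿ` becomes `(n − i + 1)/n`, and the
applicable `1`-based range `2 ≤ k ≤ n−1` becomes `1 ≤ k` with `k + 1 ≤ n − 1`.) -/
theorem fp_transitive_waiting_times (n : ℕ) (hn : 3 ≤ n)
    (T : Matrix (Fin n) (Fin n) ℝ)
    (hT : ∀ i j : Fin n, T i j =
      if (i : ℕ) = (j : ℕ) + 1 then ((n : ℝ) - (i : ℕ) + 1) / n
      else if (i : ℕ) + 1 = (j : ℕ) then -(((n : ℝ) - (i : ℕ) + 1) / n) else 0)
    (i : ℕ → Fin n) (hi1 : i 1 = ⟨0, by omega⟩)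
    (xbar : ℕ → Fin n → ℝ)
    (hxbar : ∀ t, xbar t = ((t : ℝ))⁻¹ • ∑ k ∈ Finset.Icc 1 t, (Pi.single (i k) 1 : Fin n → ℝ))
    (hBR : ∀ t, 1 ≤ t → ∀ j, T.mulVec (xbar t) j ≤ T.mulVec (xbar t) (i (t+1)))
    (τ : ℕ → ℕ) (hτ : ∀ k, τ k = sInf {t | 1 ≤ t ∧ (i t : ℕ) = k}) :
    (∀ t : ℕ, 1 ≤ t → i (t+1) = i t ∨ ((i (t+1) : ℕ) = (i t : ℕ) + 1)) ∧
    (∀ k : ℕ, k ≤ n - 1 → ∃ t, 1 ≤ t ∧ (i t : ℕ) = k) ∧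
    (∀ k : ℕ, 1 ≤ k → k + 1 ≤ n - 1 →
      (τ k : ℤ) - (τ (k-1) : ℤ) < (τ (k+1) : ℤ) - (τ k : ℤ)) := by
  classical
  have hi1v : (i 1 : ℕ) = 0 := by rw [hi1]
  -- the (unnormalized) payoff vector
  set g : ℕ → Fin n → ℝ := fun t j => ∑ k ∈ Finset.Icc 1 t, T j (i k) with hgdef
  have hg0 : ∀ j, g 0 j = 0 := by intro j; simp [hgdef]
  have hgrec : ∀ t j, g (t+1) j = g t j + T j (i (t+1)) := by
    intro t j
    simp only [hgdef]
    rw [Finset.sum_Icc_succ_top (by omega)]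
  -- entry lemmas for T
  have hT1 : ∀ a b : Fin n, (a:ℕ) = (b:ℕ)+1 → T a b = ((n:ℝ) - (a:ℕ) + 1)/n := by
    intro a b h; rw [hT]; simp [h]
  have hT2 : ∀ a b : Fin n, (a:ℕ)+1 = (b:ℕ) → T a b = -(((n:ℝ) - (a:ℕ) + 1)/n) := by
    intro a b h
    have h' : (a:ℕ) ≠ (b:ℕ)+1 := by omega
    rw [hT]; simp [h, h']
  have hT0 : ∀ a b : Fin n, (a:ℕ) ≠ (b:ℕ)+1 → (a:ℕ)+1 ≠ (b:ℕ) → T a b = 0 := by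
    intro a b h1 h2; rw [hT]; simp [h1, h2]
  have hcpos : ∀ a : ℕ, a < n → (0:ℝ) < ((n:ℝ) - a + 1)/n := by
    intro a ha
    have h1 : (a:ℝ) < n := by exact_mod_cast ha
    have h2 : (0:ℝ) < n := by positivity
    apply div_pos (by linarith) h2
  -- relation between mulVec and g
  have hmul : ∀ t (j : Fin n), T.mulVec (xbar t) j = (t:ℝ)⁻¹ * g t j := by
    intro t j
    rw [hxbar t, mulVec_smul]
    simp only [Pi.smul_apply, smul_eq_mul]
    congr 1
    have h1 : T.mulVec (∑ k ∈ Finset.Icc 1 t, (Pi.single (i k) 1 : Fin n → ℝ)) j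
        = ∑ k ∈ Finset.Icc 1 t, T.mulVec (Pi.single (i k) 1) j := by
      simp only [Matrix.mulVec, dotProduct, Finset.sum_apply, Finset.mul_sum]
      exact Finset.sum_comm
    rw [h1]
    simp [Matrix.mulVec_single, hgdef]
  have hBR' : ∀ t, 1 ≤ t → ∀ j, g t j ≤ g t (i (t+1)) := by
    intro t ht j
    have h := hBR t ht j
    rw [hmul, hmul] at h
    have hpos : (0:ℝ) < (t:ℝ)⁻¹ := by
      have : (0:ℝ) < t := by exact_mod_cast ht
      positivity
    exact le_of_mul_le_mul_left h hpos
  -- step deduction from the invariant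
  have hstepof : ∀ t, 1 ≤ t →
      (∀ j : Fin n, (i t : ℕ) + 1 < (j:ℕ) → g t j = 0) →
      (∀ j : Fin n, (j:ℕ) < (i t : ℕ) → g t j < g t (i t)) →
      (∀ j : Fin n, (j:ℕ) = (i t : ℕ) + 1 → 0 < g t j) →
      ((i (t+1) : ℕ) = (i t:ℕ) ∨ (i (t+1):ℕ) = (i t:ℕ)+1) := by
    intro t ht ka kb kc
    by_contra hcon
    push_neg at hcon
    rcases Nat.lt_or_ge (i (t+1) : ℕ) (i t : ℕ) with hlt | hge
    · have h1 := kb (i (t+1)) hlt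
      have h2 := hBR' t ht (i t)
      linarith
    · have hgt : (i t : ℕ) + 1 < (i (t+1) : ℕ) := by omega
      have h1 := ka (i (t+1)) hgt
      have hlt2 : (i t : ℕ) + 1 < n := lt_trans hgt (i (t+1)).isLt
      have h2 := kc ⟨(i t : ℕ)+1, hlt2⟩ rfl
      have h3 := hBR' t ht ⟨(i t : ℕ)+1, hlt2⟩
      rw [h1] at h3
      linarith
  -- main invariant
  have key : ∀ t, 1 ≤ t →
      (∀ j : Fin n, (i t : ℕ) + 1 < (j:ℕ) → g t j = 0) ∧
      (∀ j : Fin n, (j:ℕ) < (i t : ℕ) → g t j < g t (i t)) ∧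
      (∀ j : Fin n, (j:ℕ) = (i t : ℕ) + 1 → 0 < g t j) := by
    intro t ht
    induction t, ht using Nat.le_induction with
    | base =>
      have hg1 : ∀ j : Fin n, g 1 j = T j (i 1) := by
        intro j; simp [hgdef]
      refine ⟨?_, ?_, ?_⟩
      · intro j hj
        rw [hg1]
        exact hT0 j (i 1) (by omega) (by omega)
      · intro j hj
        exact absurd hj (by omega)
      · intro j hj
        rw [hg1, hT1 j (i 1) (by omega)]
        have hj1 : (j:ℕ) = 1 := by omega
        rw [hj1]
        exact hcpos 1 (by omega)
    | succ t ht ih =>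
      obtain ⟨ka, kb, kc⟩ := ih
      have hst := hstepof t ht ka kb kc
      have hib := hBR' t ht
      rcases hst with hst | hst
      · -- stay: i (t+1) = i t
        have hii : i (t+1) = i t := Fin.val_injective hst
        refine ⟨?_, ?_, ?_⟩
        · intro j hj
          rw [hgrec t j, hii, ka j (by omega), hT0 j (i t) (by omega) (by omega)]
          norm_num
        · intro j hj
          rw [hgrec t j, hgrec t (i (t+1)), hii]
          have h0 : T (i t) (i t) = 0 := hT0 _ _ (by omega) (by omega)
          have hb := kb j (by omega)
          by_cases hc : (j:ℕ) + 1 = (i t:ℕ)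
          · have h2 := hT2 j (i t) hc
            have hp := hcpos (j:ℕ) j.isLt
            rw [h2, h0]; linarith
          · rw [hT0 j (i t) (by omega) hc, h0]; linarith
        · intro j hj
          rw [hgrec t j, hii]
          have h1 := kc j (by omega)
          have h2 := hT1 j (i t) (by omega)
          have hp := hcpos (j:ℕ) j.isLt
          rw [h2]
          linarith
      · -- advance: (i (t+1)) = (i t) + 1
        refine ⟨?_, ?_, ?_⟩
        · intro j hj
          rw [hgrec t j, ka j (by omega), hT0 j (i (t+1)) (by omega) (by omega)]
          norm_num
        · intro j hj
          have hgi : g (t+1) (i (t+1)) = g t (i (t+1)) := by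
            rw [hgrec, hT0 (i (t+1)) (i (t+1)) (by omega) (by omega)]
            ring
          rw [hgi, hgrec t j]
          by_cases hc : (j:ℕ) = (i t:ℕ)
          · have h2 := hT2 j (i (t+1)) (by omega)
            have hp := hcpos (j:ℕ) j.isLt
            have hb := hib j
            rw [h2]; linarith
          · rw [hT0 j (i (t+1)) (by omega) (by omega)]
            have hb := kb j (by omega)
            have hb2 := hib (i t)
            linarith
        · intro j hj
          rw [hgrec t j, ka j (by omega), hT1 j (i (t+1)) (by omega)]
          have hp := hcpos (j:ℕ) j.isLt
          linarith
  have step : ∀ t, 1 ≤ t → (i (t+1) : ℕ) = (i t:ℕ) ∨ (i (t+1):ℕ) = (i t:ℕ)+1 := by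
    intro t ht
    obtain ⟨ka, kb, kc⟩ := key t ht
    exact hstepof t ht ka kb kc
  -- monotonicity
  have hmono : ∀ s t, 1 ≤ s → s ≤ t → (i s:ℕ) ≤ (i t:ℕ) := by
    intro s t hs hst
    induction t, hst using Nat.le_induction with
    | base => exact le_refl _
    | succ t hst ih =>
      rcases step t (le_trans hs hst) with h | h <;> omega
  -- intermediate value property
  have hivt : ∀ t s v, 1 ≤ t → t ≤ s → (i t:ℕ) ≤ v → v ≤ (i s:ℕ) →
      ∃ u, t ≤ u ∧ u ≤ s ∧ (i u:ℕ) = v := by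
    intro t s v ht hts
    induction s, hts using Nat.le_induction with
    | base => intro h1 h2; exact ⟨t, le_refl _, le_refl _, by omega⟩
    | succ s hs ih =>
      intro h1 h2
      by_cases hv : v ≤ (i s:ℕ)
      · obtain ⟨u, hu1, hu2, hu3⟩ := ih h1 hv
        exact ⟨u, hu1, by omega, hu3⟩
      · rcases step s (le_trans ht hs) with h | h
        · exact ⟨s+1, by omega, le_refl _, by omega⟩
        · exact ⟨s+1, by omega, le_refl _, by omega⟩
  -- no stalling below the top
  have hadv : ∀ t, 1 ≤ t → (i t:ℕ) < n - 1 → ∃ s, t ≤ s ∧ (i t:ℕ) < (i s:ℕ) := by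
    intro t ht htop
    by_contra hno
    push_neg at hno
    have hconst : ∀ s, t ≤ s → (i s : ℕ) = (i t : ℕ) := by
      intro s hs
      have h1 := hmono t s ht hs
      have h2 := hno s hs
      omega
    have hlt : (i t:ℕ) + 1 < n := by omega
    set jm : Fin n := ⟨(i t:ℕ)+1, hlt⟩ with hjm
    have hieq : ∀ r : ℕ, i (t + r) = i t :=
      fun r => Fin.val_injective (hconst (t+r) (by omega))
    have hTjm : T jm (i t) = ((n:ℝ) - (jm:ℕ) + 1)/n := hT1 jm (i t) rfl
    have cpos : 0 < ((n:ℝ) - (jm:ℕ) + 1)/n := hcpos (jm:ℕ) jm.isLt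
    have hgrow : ∀ r : ℕ, g (t + r) jm = g t jm + r * (((n:ℝ) - (jm:ℕ) + 1)/n) ∧
        g (t+r) (i t) = g t (i t) := by
      intro r
      induction r with
      | zero => simp
      | succ r ihr =>
        have e1 : t + (r+1) = (t + r) + 1 := by omega
        have hir : i ((t+r)+1) = i t := by rw [← e1]; exact hieq (r+1)
        rw [e1, hgrec, hgrec, hir]
        constructor
        · rw [ihr.1, hTjm]; push_cast; ring
        · rw [ihr.2, hT0 (i t) (i t) (by omega) (by omega)]; ring
    obtain ⟨r, hr⟩ := exists_nat_gt ((g t (i t) - g t jm) / (((n:ℝ) - (jm:ℕ) + 1)/n))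
    have hbr := hBR' (t + r) (by omega) jm
    have hnext : i ((t+r)+1) = i t := by
      have h := hieq (r+1)
      rw [show t + (r+1) = (t+r)+1 from by omega] at h
      exact h
    rw [hnext, (hgrow r).1, (hgrow r).2] at hbr
    rw [div_lt_iff₀ cpos] at hr
    linarith
  -- every index up to n-1 is hit
  have hit : ∀ k, k ≤ n - 1 → ∃ t, 1 ≤ t ∧ (i t : ℕ) = k := by
    intro k
    induction k with
    | zero => intro _; exact ⟨1, le_refl _, hi1v⟩
    | succ k ih =>
      intro hk
      obtain ⟨t, ht, htk⟩ := ih (by omega)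
      obtain ⟨s, hts, hlt⟩ := hadv t ht (by omega)
      obtain ⟨u, hu1, hu2, hu3⟩ := hivt t s (k+1) ht hts (by omega) (by omega)
      exact ⟨u, le_trans ht hu1, hu3⟩
  -- basic facts about τ
  have hτmem : ∀ k, k ≤ n - 1 → 1 ≤ τ k ∧ (i (τ k):ℕ) = k := by
    intro k hk
    obtain ⟨t, ht⟩ := hit k hk
    rw [hτ]
    exact Nat.sInf_mem (⟨t, ht⟩ : {t | 1 ≤ t ∧ (i t : ℕ) = k}.Nonempty)
  have hτle : ∀ k t, 1 ≤ t → (i t:ℕ) = k → τ k ≤ t := by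
    intro k t ht hv
    rw [hτ]
    exact Nat.sInf_le ⟨ht, hv⟩
  have hτ0 : τ 0 = 1 := by
    have h1 := hτle 0 1 (le_refl _) hi1v
    have h2 := (hτmem 0 (by omega)).1
    omega
  have hτlt : ∀ k, k + 1 ≤ n - 1 → τ k < τ (k+1) := by
    intro k hk
    obtain ⟨h1, h2⟩ := hτmem (k+1) hk
    obtain ⟨u, hu1, hu2, hu3⟩ := hivt 1 (τ (k+1)) k (le_refl _) h1 (by omega) (by omega)
    have h3 := hτle k u (le_trans (by norm_num) hu1) hu3
    have hne : τ k ≠ τ (k+1) := by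
      intro he
      have := (hτmem k (by omega)).2
      rw [he, h2] at this
      omega
    omega
  -- phase characterization
  have hphase : ∀ k, k + 1 ≤ n - 1 → ∀ s, τ k ≤ s → s ≤ τ (k+1) - 1 → (i s:ℕ) = k := by
    intro k hk s hs1 hs2
    obtain ⟨ht1, ht2⟩ := hτmem k (by omega)
    have hlow : k ≤ (i s:ℕ) := by
      have := hmono (τ k) s ht1 hs1
      omega
    by_contra hcon
    have hk1 : k + 1 ≤ (i s:ℕ) := by omega
    obtain ⟨u, hu1, hu2, hu3⟩ := hivt (τ k) s (k+1) ht1 hs1 (by omega) hk1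
    have h3 := hτle (k+1) u (le_trans ht1 hu1) hu3
    have h4 := (hτmem (k+1) hk).1
    omega
  -- splitting sums
  have hIoc : ∀ t : ℕ, Finset.Icc 1 t = Finset.Ioc 0 t := by
    intro t; rw [← Finset.Icc_add_one_left_eq_Ioc]; rfl
  have hgsplit : ∀ a b (j : Fin n), a ≤ b → g b j = g a j + ∑ s ∈ Finset.Ioc a b, T j (i s) := by
    intro a b j hab
    simp only [hgdef, hIoc]
    rw [← Finset.sum_Ioc_consecutive _ (Nat.zero_le a) hab]
  have hconstsum : ∀ a b v (hv : v < n) (j : Fin n), (∀ s, a < s → s ≤ b → (i s:ℕ) = v) →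
      ∑ s ∈ Finset.Ioc a b, T j (i s) = ((b - a : ℕ) : ℝ) * T j ⟨v, hv⟩ := by
    intro a b v hv j h
    have hrw : ∀ s ∈ Finset.Ioc a b, T j (i s) = T j ⟨v, hv⟩ := by
      intro s hs
      rw [Finset.mem_Ioc] at hs
      have : i s = ⟨v, hv⟩ := Fin.val_injective (h s hs.1 hs.2)
      rw [this]
    rw [Finset.sum_congr rfl hrw, Finset.sum_const, Nat.card_Ioc, nsmul_eq_mul]
  refine ⟨?_, hit, ?_⟩
  · intro t ht
    rcases step t ht with h | h
    · exact Or.inl (Fin.val_injective h)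
    · exact Or.inr h
  · intro k hk1 hk2
    have hkm : k - 1 + 1 = k := by omega
    have hkn : k < n := by omega
    have hk1n : k + 1 < n := by omega
    have hkm1n : k - 1 < n := by omega
    have hab : τ (k-1) < τ k := by
      have h := hτlt (k-1) (by omega)
      rwa [hkm] at h
    have hbe : τ k < τ (k+1) := hτlt k hk2
    have ha1 : 1 ≤ τ (k-1) := (hτmem (k-1) (by omega)).1
    have hph1 : ∀ s, τ (k-1) ≤ s → s ≤ τ k - 1 → (i s:ℕ) = k - 1 := by
      intro s h1 h2
      have h := hphase (k-1) (by omega) s h1 (by rw [hkm]; exact h2)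
      exact h
    have hph2 : ∀ s, τ k ≤ s → s ≤ τ (k+1) - 1 → (i s:ℕ) = k := hphase k hk2
    set a := τ (k-1) with hadef
    set b := τ k with hbdef
    set e := τ (k+1) with hedef
    -- value of g at time e-1 in coordinate k+1
    have hsK1 : g (e-1) ⟨k+1, hk1n⟩ = g (b-1) ⟨k+1, hk1n⟩
        + ((e-1-(b-1) : ℕ):ℝ) * T ⟨k+1,hk1n⟩ ⟨k,hkn⟩ := by
      rw [hgsplit (b-1) (e-1) _ (by omega)]
      congr 1
      exact hconstsum (b-1) (e-1) k hkn _ (fun s h1 h2 => hph2 s (by omega) h2)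
    have hzK1 : g (b-1) ⟨k+1, hk1n⟩ = 0 := by
      have hib : (i (b-1):ℕ) = k - 1 := hph1 (b-1) (by omega) (by omega)
      exact (key (b-1) (by omega)).1 ⟨k+1, hk1n⟩ (show (i (b-1):ℕ) + 1 < k + 1 by omega)
    -- value of g at time e-1 in coordinate k
    have hsK : g (e-1) ⟨k, hkn⟩ = g (a-1) ⟨k, hkn⟩
        + ((b-1-(a-1):ℕ):ℝ) * T ⟨k,hkn⟩ ⟨k-1, hkm1n⟩
        + ((e-1-(b-1):ℕ):ℝ) * T ⟨k,hkn⟩ ⟨k,hkn⟩ := by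
      rw [hgsplit (b-1) (e-1) _ (by omega), hgsplit (a-1) (b-1) _ (by omega)]
      rw [hconstsum (b-1) (e-1) k hkn _ (fun s h1 h2 => hph2 s (by omega) h2),
          hconstsum (a-1) (b-1) (k-1) hkm1n _ (fun s h1 h2 => hph1 s (by omega) h2)]
    have hzK : g (a-1) ⟨k, hkn⟩ = 0 := by
      by_cases hk1' : k = 1
      · have ha' : a = 1 := by rw [hadef, hk1', hτ0]
        rw [show a - 1 = 0 from by omega]
        exact hg0 _
      · have hcd : τ (k-2) < τ (k-1) := by
          have h := hτlt (k-2) (by omega)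
          rwa [show k-2+1 = k-1 from by omega] at h
        have ha2 : 2 ≤ a := by
          have := (hτmem (k-2) (by omega)).1
          omega
        have hia : (i (a-1):ℕ) = k - 2 := by
          have h := hphase (k-2) (by omega) (a-1) (by omega)
            (by rw [show k-2+1 = k-1 from by omega])
          exact h
        exact (key (a-1) (by omega)).1 ⟨k, hkn⟩ (show (i (a-1):ℕ) + 1 < k by omega)
    -- best response at time e-1 forces the inequality
    have hie : i ((e-1)+1) = ⟨k+1, hk1n⟩ := by
      rw [show (e-1)+1 = e from by omega]
      exact Fin.val_injective ((hτmem (k+1) hk2).2)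
    have hbr := hBR' (e-1) (by omega) ⟨k, hkn⟩
    rw [hie, hsK1, hzK1, hsK, hzK] at hbr
    rw [hT1 ⟨k+1,hk1n⟩ ⟨k,hkn⟩ rfl,
        hT1 ⟨k,hkn⟩ ⟨k-1, hkm1n⟩ (show k = (k-1)+1 by omega),
        hT0 ⟨k,hkn⟩ ⟨k,hkn⟩ (by omega) (by omega)] at hbr
    rw [show b-1-(a-1) = b-a from by omega, show e-1-(b-1) = e-b from by omega] at hbr
    simp only [Fin.val_mk] at hbr
    -- numeric conclusion
    set X : ℝ := ((b-a : ℕ):ℝ) with hX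
    set Y : ℝ := ((e-b : ℕ):ℝ) with hY
    have hnpos : (0:ℝ) < n := by positivity
    have hX1 : (1:ℝ) ≤ X := by
      rw [hX]
      exact_mod_cast Nat.one_le_iff_ne_zero.mpr (by omega)
    have hA2 : (2:ℝ) ≤ (n:ℝ) - k := by
      have h : (k:ℝ) + 2 ≤ n := by exact_mod_cast (show k + 2 ≤ n from by omega)
      linarith
    have hbr2 : X * ((n:ℝ) - k + 1) ≤ Y * ((n:ℝ) - ((k+1:ℕ):ℝ) + 1) := by
      have h3 := mul_le_mul_of_nonneg_right hbr hnpos.le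
      calc X * ((n:ℝ)-k+1) = (0 + X * (((n:ℝ)-k+1)/n) + Y * 0) * n := by field_simp; ring
        _ ≤ (0 + Y * (((n:ℝ)-((k+1:ℕ):ℝ)+1)/n)) * n := h3
        _ = Y * ((n:ℝ)-((k+1:ℕ):ℝ)+1) := by field_simp; ring
    have hXY : X < Y := by
      push_cast at hbr2
      nlinarith [hbr2, hX1, hA2]
    have hnat : b - a < e - b := by
      rw [hX, hY] at hXY
      exact_mod_cast hXY
    omega
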